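/- arXiv:2601.10977 — 2 statements merged into one kernel-verified Lean document; each statement's English description precedes it below -/
import Mathlib

section
/- Let τ₁, τ₂, τ₃, τ₄ > 0 be real numbers and let ω₁, ω₂, ω₃, ω₄ be defined by ω₁ = √(τ₂τ₃τ₄)/[(√τ₁+√τ₃)(√(τ₁τ₃)+√(τ₂τ₄))], ω₂ = √(τ₁τ₃τ₄)/[(√τ₂+√τ₄)(√(τ₁τ₃)+√(τ₂τ₄))], ω₃ = √(τ₁τ₂τ₄)/[(√τ₁+√τ₃)(√(τ₁τ₃)+√(τ₂τ₄))], ω₄ = √(τ₁τ₂τ₃)/[(√τ₂+√τ₄)(√(τ₁τ₃)+√(τ₂τ₄))]. Then ω₁·τ₁ - ω₂·τ₂ + ω₃·τ₃ - ω₄·τ₄ = 0. -/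
open Real

theorem weights_second_moment (τ₁ τ₂ τ₃ τ₄ : ℝ)
    (h₁ : 0 < τ₁) (h₂ : 0 < τ₂) (h₃ : 0 < τ₃) (h₄ : 0 < τ₄)
    (ω₁ ω₂ ω₃ ω₄ : ℝ)
    (hω₁ : ω₁ = Real.sqrt (τ₂ * τ₃ * τ₄) /
      ((Real.sqrt τ₁ + Real.sqrt τ₃) * (Real.sqrt (τ₁ * τ₃) + Real.sqrt (τ₂ * τ₄))))
    (hω₂ : ω₂ = Real.sqrt (τ₁ * τ₃ * τ₄) /
      ((Real.sqrt τ₂ + Real.sqrt τ₄) * (Real.sqrt (τ₁ * τ₃) + Real.sqrt (τ₂ * τ₄))))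
    (hω₃ : ω₃ = Real.sqrt (τ₁ * τ₂ * τ₄) /
      ((Real.sqrt τ₁ + Real.sqrt τ₃) * (Real.sqrt (τ₁ * τ₃) + Real.sqrt (τ₂ * τ₄))))
    (hω₄ : ω₄ = Real.sqrt (τ₁ * τ₂ * τ₃) /
      ((Real.sqrt τ₂ + Real.sqrt τ₄) * (Real.sqrt (τ₁ * τ₃) + Real.sqrt (τ₂ * τ₄)))) :
    ω₁ * τ₁ - ω₂ * τ₂ + ω₃ * τ₃ - ω₄ * τ₄ = 0 := by
  have s₁ : (0:ℝ) < Real.sqrt τ₁ := Real.sqrt_pos.2 h₁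
  have s₂ : (0:ℝ) < Real.sqrt τ₂ := Real.sqrt_pos.2 h₂
  have s₃ : (0:ℝ) < Real.sqrt τ₃ := Real.sqrt_pos.2 h₃
  have s₄ : (0:ℝ) < Real.sqrt τ₄ := Real.sqrt_pos.2 h₄
  have e₁ : τ₁ = Real.sqrt τ₁ ^ 2 := (Real.sq_sqrt h₁.le).symm
  have e₂ : τ₂ = Real.sqrt τ₂ ^ 2 := (Real.sq_sqrt h₂.le).symm
  have e₃ : τ₃ = Real.sqrt τ₃ ^ 2 := (Real.sq_sqrt h₃.le).symm
  have e₄ : τ₄ = Real.sqrt τ₄ ^ 2 := (Real.sq_sqrt h₄.le).symm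
  rw [hω₁, hω₂, hω₃, hω₄]
  simp only [Real.sqrt_mul h₁.le, Real.sqrt_mul h₂.le, Real.sqrt_mul h₃.le,
    Real.sqrt_mul (mul_nonneg h₁.le h₂.le), Real.sqrt_mul (mul_nonneg h₁.le h₃.le),
    Real.sqrt_mul (mul_nonneg h₂.le h₃.le)]
  rw [e₁, e₂, e₃, e₄]
  set a := Real.sqrt τ₁
  set b := Real.sqrt τ₂
  set c := Real.sqrt τ₃
  set d := Real.sqrt τ₄
  simp only [Real.sqrt_sq s₁.le, Real.sqrt_sq s₂.le, Real.sqrt_sq s₃.le, Real.sqrt_sq s₄.le]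
  have hA : a + c ≠ 0 := by positivity
  have hB : b + d ≠ 0 := by positivity
  have hC : a * c + b * d ≠ 0 := by positivity
  have k1 : b * c * d / ((a + c) * (a * c + b * d)) * a ^ 2 +
      a * b * d / ((a + c) * (a * c + b * d)) * c ^ 2 = a * b * c * d / (a * c + b * d) := by
    field_simp
  have k2 : a * c * d / ((b + d) * (a * c + b * d)) * b ^ 2 +
      a * b * c / ((b + d) * (a * c + b * d)) * d ^ 2 = a * b * c * d / (a * c + b * d) := by
    field_simp
  linarith
end

section
/- Let θ be a real number, set α = sin θ + cos θ, β = sin θ - cos θ, and let σ₁, σ₂ ∈ ℝ and t ≥ 0. Consider the four branch displacement pairs (d¹ₓ, d¹ᵧ) = (α·σ₁·√t, α·σ₂·√t), (d²ₓ, d²ᵧ) = (-β·σ₁·√t, β·σ₂·√t), (d³ₓ, d³ᵧ) = (-α·σ₁·√t, -α·σ₂·√t), (d⁴ₓ, d⁴ᵧ) = (β·σ₁·√t, -β·σ₂·√t). Then (1/4)·Σₖ dᵏₓ = 0, (1/4)·Σₖ dᵏᵧ = 0, (1/4)·Σₖ (dᵏₓ)² = σ₁²·t, (1/4)·Σₖ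 (dᵏᵧ)² = σ₂²·t, and (1/4)·Σₖ dᵏₓ·dᵏᵧ = sin(2θ)·σ₁·σ₂·t. -/
open Real

theorem branch_moment_matching (θ σ₁ σ₂ t : ℝ) (ht : 0 ≤ t)
    (α β : ℝ) (hα : α = Real.sin θ + Real.cos θ) (hβ : β = Real.sin θ - Real.cos θ) :
    (1 / 4) * (α * σ₁ * Real.sqrt t + (-(β * σ₁ * Real.sqrt t)) +
      (-(α * σ₁ * Real.sqrt t)) + β * σ₁ * Real.sqrt t) = 0 ∧
    (1 / 4) * (α * σ₂ * Real.sqrt t + β * σ₂ * Real.sqrt t +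
      (-(α * σ₂ * Real.sqrt t)) + (-(β * σ₂ * Real.sqrt t))) = 0 ∧
    (1 / 4) * ((α * σ₁ * Real.sqrt t) ^ 2 + (-(β * σ₁ * Real.sqrt t)) ^ 2 +
      (-(α * σ₁ * Real.sqrt t)) ^ 2 + (β * σ₁ * Real.sqrt t) ^ 2) = σ₁ ^ 2 * t ∧
    (1 / 4) * ((α * σ₂ * Real.sqrt t) ^ 2 + (β * σ₂ * Real.sqrt t) ^ 2 +
      (-(α * σ₂ * Real.sqrt t)) ^ 2 + (-(β * σ₂ * Real.sqrt t)) ^ 2) = σ₂ ^ 2 * t ∧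
    (1 / 4) * ((α * σ₁ * Real.sqrt t) * (α * σ₂ * Real.sqrt t) +
      (-(β * σ₁ * Real.sqrt t)) * (β * σ₂ * Real.sqrt t) +
      (-(α * σ₁ * Real.sqrt t)) * (-(α * σ₂ * Real.sqrt t)) +
      (β * σ₁ * Real.sqrt t) * (-(β * σ₂ * Real.sqrt t))) =
      Real.sin (2 * θ) * σ₁ * σ₂ * t := by
  have hs : Real.sqrt t ^ 2 = t := Real.sq_sqrt ht
  have hpy : Real.sin θ ^ 2 + Real.cos θ ^ 2 = 1 := Real.sin_sq_add_cos_sq θ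
  have h2 : Real.sin (2 * θ) = 2 * Real.sin θ * Real.cos θ := Real.sin_two_mul θ
  subst hα hβ
  refine ⟨by ring, by ring, ?_, ?_, ?_⟩
  · linear_combination (σ₁^2 * (Real.sin θ^2 + Real.cos θ^2)) * hs + σ₁^2 * t * hpy
  · linear_combination (σ₂^2 * (Real.sin θ^2 + Real.cos θ^2)) * hs + σ₂^2 * t * hpy
  · linear_combination (2 * Real.sin θ * Real.cos θ * σ₁ * σ₂) * hs - σ₁ * σ₂ * t * h2
end
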